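/- Maximum principle: let 0 < α < 1, h > 0, and u : ℤ → ℝ bounded with u(j₀) = 0 and u(j) ≥ 0 for all j ≥ j₀. Then (δ_right)^α u(j₀) := (1/h^α) Σ_{m=0}^∞ Λ^α(m) u(j₀+m) ≤ 0. Moreover equality holds if and only if u(j) = 0 for all j ≥ j₀. -/

import Mathlib

open Real

/-- The generalized binomial coefficient `(α choose m) = α(α−1)⋯(α−m+1)/m!`. -/
noncomputable def rchoose (α : ℝ) (m : ℕ) : ℝ :=
  (∏ i ∈ Finset.range m, (α - i)) / (m.factorial : ℝ)

/-- The kernel `Λ^α(m) = (−1)^m (α choose m)`. -/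
noncomputable def Lam (α : ℝ) (m : ℕ) : ℝ := (-1) ^ m * rchoose α m

/-- The fractional discrete derivative on the mesh `ℤ_h`:
`(δ_right)^α u(n) = h^{-α} ∑_{m=0}^∞ Λ^α(m) u(n+m)`. -/
noncomputable def deltaRightPow (α h : ℝ) (u : ℤ → ℝ) (n : ℤ) : ℝ :=
  h ^ (-α) * ∑' m : ℕ, Lam α m * u (n + (m : ℤ))

lemma Lam_zero (α : ℝ) : Lam α 0 = 1 := by simp [Lam, rchoose]

lemma Lam_succ (α : ℝ) (m : ℕ) :
    Lam α (m + 1) = Lam α m * ((m - α) / (m + 1)) := by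
  have hm : (m.factorial : ℝ) ≠ 0 := Nat.cast_ne_zero.mpr m.factorial_ne_zero
  have hm1 : (m : ℝ) + 1 ≠ 0 := by positivity
  simp only [Lam, rchoose, Finset.prod_range_succ, Nat.factorial_succ, pow_succ]
  push_cast
  field_simp
  ring


noncomputable def Pprod (α : ℝ) (N : ℕ) : ℝ :=
  ∏ i ∈ Finset.range N, (((i : ℝ) + 1 - α) / ((i : ℝ) + 1))

lemma Lam_succ_eq (α : ℝ) (m : ℕ) :
    Lam α (m + 1) = -(α / (m + 1)) * Pprod α m := by
  induction m with
  | zero => simp [Lam_succ, Lam_zero, Pprod]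
  | succ n ih =>
      rw [Lam_succ, ih]
      simp only [Pprod, Finset.prod_range_succ]
      have h1 : (n : ℝ) + 1 ≠ 0 := by positivity
      have h2 : (n : ℝ) + 1 + 1 ≠ 0 := by positivity
      push_cast
      field_simp

lemma sum_Lam (α : ℝ) (N : ℕ) :
    ∑ m ∈ Finset.range (N + 1), Lam α m = Pprod α N := by
  induction N with
  | zero => simp [Lam_zero, Pprod]
  | succ n ih =>
      rw [Finset.sum_range_succ, ih, Lam_succ_eq]
      simp only [Pprod, Finset.prod_range_succ]
      have h1 : (n : ℝ) + 1 ≠ 0 := by positivity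
      push_cast
      field_simp
      ring

lemma Pprod_pos {α : ℝ} (hα1 : α < 1) (N : ℕ) : 0 < Pprod α N := by
  apply Finset.prod_pos
  intro i _
  have hi : (0:ℝ) < (i : ℝ) + 1 := by positivity
  apply div_pos _ hi
  have : α < (i:ℝ) + 1 := lt_of_lt_of_le hα1 (by linarith [Nat.cast_nonneg (α := ℝ) i])
  linarith

lemma Lam_neg {α : ℝ} (hα : 0 < α) (hα1 : α < 1) (m : ℕ) : Lam α (m + 1) < 0 := by
  rw [Lam_succ_eq]
  have h1 : (0:ℝ) < (m : ℝ) + 1 := by positivity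
  have h2 := Pprod_pos hα1 m
  have : 0 < α / ((m:ℝ)+1) * Pprod α m := by positivity
  linarith

lemma sum_negLam_le {α : ℝ} (hα : 0 < α) (hα1 : α < 1) (N : ℕ) :
    ∑ m ∈ Finset.range N, -Lam α (m + 1) ≤ 1 := by
  have h := sum_Lam α N
  rw [Finset.sum_range_succ' (fun m => Lam α m) N, Lam_zero] at h
  have hP := Pprod_pos hα1 N
  have h2 : ∑ m ∈ Finset.range N, -Lam α (m + 1) = 1 - Pprod α N := by
    rw [Finset.sum_neg_distrib]; linarith
  linarith

lemma summable_negLam {α : ℝ} (hα : 0 < α) (hα1 : α < 1) :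
    Summable (fun m : ℕ => -Lam α (m + 1)) := by
  apply summable_of_sum_range_le (fun m => by linarith [Lam_neg hα hα1 m])
  exact sum_negLam_le hα hα1

/-- Maximum principle for the fractional discrete derivative. -/
theorem maximum_principle (α h : ℝ) (hα : 0 < α) (hα1 : α < 1) (hh : 0 < h)
    (u : ℤ → ℝ) (M : ℝ) (hu : ∀ n, |u n| ≤ M) (j₀ : ℤ)
    (hzero : u j₀ = 0) (hnonneg : ∀ j, j₀ ≤ j → 0 ≤ u j) :
    deltaRightPow α h u j₀ ≤ 0 ∧
      (deltaRightPow α h u j₀ = 0 ↔ ∀ j, j₀ ≤ j → u j = 0) := by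
  have hM : 0 ≤ M := le_trans (abs_nonneg _) (hu j₀)
  set f : ℕ → ℝ := fun m => Lam α m * u (j₀ + (m : ℤ)) with hf
  -- nonpositivity of shifted terms
  have hterm : ∀ m : ℕ, f (m + 1) ≤ 0 := by
    intro m
    have h1 := Lam_neg hα hα1 m
    have h2 : 0 ≤ u (j₀ + ((m : ℕ) + 1 : ℕ)) := hnonneg _ (by push_cast; omega)
    exact mul_nonpos_of_nonpos_of_nonneg (le_of_lt h1) h2
  -- summability
  have hsum1 : Summable (fun m : ℕ => -f (m + 1)) := by
    refine Summable.of_nonneg_of_le (fun m => by linarith [hterm m]) ?_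
      ((summable_negLam hα hα1).mul_right M)
    · intro m
      have h1 := Lam_neg hα hα1 m
      have h2 : |u (j₀ + ((m+1 : ℕ) : ℤ))| ≤ M := hu _
      have : -f (m+1) = -Lam α (m+1) * u (j₀ + ((m+1 : ℕ) : ℤ)) := by simp [hf]
      rw [this]
      have h3 : u (j₀ + ((m+1 : ℕ) : ℤ)) ≤ M := le_trans (le_abs_self _) h2
      exact mul_le_mul_of_nonneg_left h3 (by linarith)
  have hsum2 : Summable (fun m : ℕ => f (m + 1)) := by
    have := hsum1.neg; simpa using this
  have hsumf : Summable f := (summable_nat_add_iff 1).mp hsum2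
  have hf0 : f 0 = 0 := by simp [hf, hzero]
  have htsum : ∑' m, f m = ∑' m, f (m + 1) := by
    rw [hsumf.tsum_eq_zero_add, hf0, zero_add]
  have hS : ∑' m, f (m + 1) ≤ 0 := tsum_nonpos hterm
  have hpos : 0 < h ^ (-α) := Real.rpow_pos_of_pos hh _
  constructor
  · rw [deltaRightPow, ← hf, htsum]
    exact mul_nonpos_of_nonneg_of_nonpos (le_of_lt hpos) hS
  · rw [deltaRightPow, ← hf, htsum]
    constructor
    · intro heq j hj
      have hS0 : ∑' m, f (m + 1) = 0 := by
        rcases mul_eq_zero.mp heq with h' | h'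
        · exact absurd h' (ne_of_gt hpos)
        · exact h'
      have hN0 : ∑' m, -f (m + 1) = 0 := by rw [tsum_neg, hS0, neg_zero]
      have hall : ∀ m : ℕ, f (m + 1) = 0 := by
        intro m
        have hle : -f (m + 1) ≤ ∑' k, -f (k + 1) :=
          Summable.le_tsum hsum1 m (fun k _ => by linarith [hterm k])
        have := hterm m
        rw [hN0] at hle
        linarith
      rcases eq_or_lt_of_le hj with rfl | hlt
      · exact hzero
      · obtain ⟨m, hm⟩ : ∃ m : ℕ, j = j₀ + ((m + 1 : ℕ) : ℤ) := by
          refine ⟨(j - j₀ - 1).toNat, ?_⟩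
          push_cast
          omega
        have := hall m
        have hL := Lam_neg hα hα1 m
        rw [hf] at this
        simp only at this
        rcases mul_eq_zero.mp this with h' | h'
        · exact absurd h' (ne_of_lt hL)
        · rw [hm]; exact h'
    · intro hz
      have : ∀ m : ℕ, f (m + 1) = 0 := by
        intro m
        have : u (j₀ + ((m + 1 : ℕ) : ℤ)) = 0 := hz _ (by push_cast; omega)
        simp only [hf]
        push_cast at this ⊢
        simp [this]
      rw [(tsum_congr this).trans tsum_zero, mul_zero]
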